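/- Let 𝔾 = (V, E) be a finite simple undirected connected graph, let k ≥ 2 be an integer, and let j ∈ V with N_j^k nonempty. Let G_j be the subgraph of 𝔾 induced on the vertex set N_j^k. Then every connected component of G_j contains at least one vertex i whose graph distance from j is exactly 2; equivalently, every connected component of G_j contains a vertex i with |N_i ∩ N_j| > 0. -/

import Mathlib

/-- The `k`-hop neighborhood of a vertex `j`: vertices at graph distance at least `2`
and at most `k` from `j`. -/
def khop {V : Type*} (G : SimpleGraph V) (k : ℕ) (j : V) : Set V :=
  {v | 2 ≤ G.dist v j ∧ G.dist v j ≤ k}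

/-- Every connected component of the subgraph induced on the `k`-hop neighborhood of `j`
contains a vertex at graph distance exactly `2` from `j`, equivalently a vertex having a
common neighbor with `j`. -/
theorem stmt1 {V : Type*} [Fintype V] (G : SimpleGraph V) (hG : G.Connected)
    (k : ℕ) (hk : 2 ≤ k) (j : V) (hne : (khop G k j).Nonempty) :
    ∀ c : (G.induce (khop G k j)).ConnectedComponent,
      ∃ i : khop G k j, (G.induce (khop G k j)).connectedComponentMk i = c ∧
        G.dist (i : V) j = 2 ∧ (G.neighborSet (i : V) ∩ G.neighborSet j).Nonempty := by
  have key : ∀ n (v : khop G k j), G.dist (v : V) j = n →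
      ∃ i : khop G k j, (G.induce (khop G k j)).Reachable i v ∧ G.dist (i : V) j = 2 := by
    intro n
    induction n using Nat.strong_induction_on with
    | _ n ih =>
      intro v hv
      rcases eq_or_lt_of_le v.2.1 with h2 | h3
      · exact ⟨v, SimpleGraph.Reachable.refl v, h2.symm⟩
      · -- n ≥ 3
        rw [hv] at h3
        obtain ⟨p, hp⟩ := hG.exists_walk_length_eq_dist (v : V) j
        have hvj : (v : V) ≠ j := by
          intro he
          rw [he, SimpleGraph.dist_self] at hv
          omega
        obtain ⟨w, h, q, rfl⟩ := SimpleGraph.Walk.exists_eq_cons_of_ne hvj p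
        have hwq : G.dist w j ≤ n - 1 := by
          have := SimpleGraph.dist_le q
          simp at hp
          omega
        have hvw : G.dist (v : V) w ≤ 1 :=
          le_trans (SimpleGraph.dist_le (SimpleGraph.Walk.cons h SimpleGraph.Walk.nil)) (by simp)
        have htri := hG.dist_triangle (u := (v : V)) (v := w) (w := j)
        have hw2 : G.dist w j = n - 1 := by omega
        have hwmem : w ∈ khop G k j := ⟨by omega, by have := v.2.2; omega⟩
        have hadj : (G.induce (khop G k j)).Adj v ⟨w, hwmem⟩ := by
          simp [SimpleGraph.comap_adj]
          exact h
        obtain ⟨i, hi, hi2⟩ := ih (n - 1) (by omega) ⟨w, hwmem⟩ hw2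
        exact ⟨i, hi.trans hadj.symm.reachable, hi2⟩
  intro c
  obtain ⟨v, hvc⟩ := c.exists_rep
  obtain ⟨i, hreach, hi2⟩ := key _ v rfl
  refine ⟨i, ?_, hi2, ?_⟩
  · rw [← hvc]
    exact SimpleGraph.ConnectedComponent.sound hreach
  · obtain ⟨p, hp⟩ := hG.exists_walk_length_eq_dist (i : V) j
    rw [hi2] at hp
    have hij : (i : V) ≠ j := by
      intro he
      rw [he, SimpleGraph.dist_self] at hi2
      omega
    obtain ⟨m, h, q, rfl⟩ := SimpleGraph.Walk.exists_eq_cons_of_ne hij p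
    have hmj : m ≠ j := by
      intro he
      subst he
      have := SimpleGraph.dist_le (SimpleGraph.Walk.cons h SimpleGraph.Walk.nil)
      simp at this
      omega
    obtain ⟨x, h2, q2, rfl⟩ := SimpleGraph.Walk.exists_eq_cons_of_ne hmj q
    have hq2 : q2.length = 0 := by simp only [SimpleGraph.Walk.length_cons] at hp; omega
    have hx : x = j := SimpleGraph.Walk.eq_of_length_eq_zero hq2
    subst hx
    exact ⟨m, h, h2.symm⟩
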